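/- arXiv:1001.1445 — 4 statements merged into one kernel-verified Lean document; each statement's English description precedes it below -/
import Mathlib

section
/- Let A, B_1, ..., B_n be events on a finite probability space, and let B be the union of the B_i. Suppose (1) for every i, Pr[A | B_i] ≤ ε, and (2) every point of the sample space belongs to at most k of the events B_i (equivalently, the intersection of any more than k of the B_i is empty). Then Pr[A | B] ≤ εk. -/
open Classical Finset in
/-- Swap sums: sum over i of sums over S i equals weighted sum with multiplicity. -/
theorem aux_swap {Ω : Type*} [Fintype Ω] (p : Ω → ℝ) {n : ℕ} (S : Fin n → Finset Ω) :
    ∑ i, ∑ ω ∈ S i, p ω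
      = ∑ ω, ((Finset.univ.filter (fun i => ω ∈ S i)).card : ℝ) * p ω := by
  classical
  have h : ∀ i : Fin n, ∑ ω ∈ S i, p ω = ∑ ω, if ω ∈ S i then p ω else 0 := by
    intro i; rw [Finset.sum_ite_mem, Finset.univ_inter]
  simp_rw [h]
  rw [Finset.sum_comm]
  refine Finset.sum_congr rfl fun ω _ => ?_
  rw [Finset.sum_ite, Finset.sum_const_zero, add_zero, Finset.sum_const, nsmul_eq_mul]

open Classical Finset in
/-- Conditional-probability union bound: if `Pr[A | B i] ≤ ε` for each `i`, and every
point of the sample space belongs to at most `k` of the events `B i`, then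
`Pr[A | ⋃ B i] ≤ ε * k`. -/
theorem stmt_0 {Ω : Type*} [Fintype Ω] (p : Ω → ℝ) (hp : ∀ ω, 0 ≤ p ω)
    (hsum : ∑ ω, p ω = 1)
    (n k : ℕ) (ε : ℝ) (A : Finset Ω) (B : Fin n → Finset Ω)
    (hBpos : ∀ i, 0 < ∑ ω ∈ B i, p ω)
    (hcond : ∀ i, (∑ ω ∈ A ∩ B i, p ω) / (∑ ω ∈ B i, p ω) ≤ ε)
    (hk : ∀ ω : Ω, (Finset.univ.filter (fun i => ω ∈ B i)).card ≤ k)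
    (hBpos' : 0 < ∑ ω ∈ Finset.univ.biUnion B, p ω) :
    (∑ ω ∈ A ∩ Finset.univ.biUnion B, p ω) / (∑ ω ∈ Finset.univ.biUnion B, p ω) ≤ ε * k := by
  classical
  have hn : 0 < n := by
    by_contra h
    push_neg at h
    interval_cases n
    simp at hBpos'
  have hε : 0 ≤ ε := by
    have i : Fin n := ⟨0, hn⟩
    exact le_trans (div_nonneg (Finset.sum_nonneg fun ω _ => hp ω) (hBpos i).le) (hcond i)
  rw [div_le_iff₀ hBpos']
  -- step 1 : Pr[A ∩ B] ≤ ∑ i, Pr[A ∩ B i]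
  have step1 : (∑ ω ∈ A ∩ Finset.univ.biUnion B, p ω) ≤ ∑ i, ∑ ω ∈ A ∩ B i, p ω := by
    have := aux_swap p (fun i => A ∩ B i)
    rw [this]
    have h2 : (∑ ω ∈ A ∩ Finset.univ.biUnion B, p ω)
        = ∑ ω, if ω ∈ A ∩ Finset.univ.biUnion B then p ω else 0 := by
      rw [Finset.sum_ite_mem, Finset.univ_inter]
    rw [h2]
    refine Finset.sum_le_sum fun ω _ => ?_
    by_cases hω : ω ∈ A ∩ Finset.univ.biUnion B
    · simp only [hω, if_true]
      have : 1 ≤ (Finset.univ.filter (fun i => ω ∈ A ∩ B i)).card := by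
        rw [Finset.one_le_card]
        obtain ⟨hA, hB⟩ := Finset.mem_inter.mp hω
        obtain ⟨i, _, hi⟩ := Finset.mem_biUnion.mp hB
        exact ⟨i, by simp [hA, hi]⟩
      calc p ω = 1 * p ω := (one_mul _).symm
        _ ≤ _ := by
          apply mul_le_mul_of_nonneg_right _ (hp ω)
          exact_mod_cast this
    · simp only [hω, if_false]
      exact mul_nonneg (Nat.cast_nonneg _) (hp ω)
  -- step 2 : ∑ i, Pr[A ∩ B i] ≤ ε * ∑ i, Pr[B i]
  have step2 : (∑ i, ∑ ω ∈ A ∩ B i, p ω) ≤ ε * ∑ i, ∑ ω ∈ B i, p ω := by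
    rw [Finset.mul_sum]
    refine Finset.sum_le_sum fun i _ => ?_
    have := (div_le_iff₀ (hBpos i)).mp (hcond i)
    linarith
  -- step 3 : ∑ i, Pr[B i] ≤ k * Pr[B]
  have step3 : (∑ i, ∑ ω ∈ B i, p ω) ≤ (k : ℝ) * ∑ ω ∈ Finset.univ.biUnion B, p ω := by
    rw [aux_swap p B]
    have h2 : (∑ ω ∈ Finset.univ.biUnion B, p ω)
        = ∑ ω, if ω ∈ Finset.univ.biUnion B then p ω else 0 := by
      rw [Finset.sum_ite_mem, Finset.univ_inter]
    rw [h2, Finset.mul_sum]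
    refine Finset.sum_le_sum fun ω _ => ?_
    by_cases hω : ω ∈ Finset.univ.biUnion B
    · simp only [hω, if_true]
      exact mul_le_mul_of_nonneg_right (by exact_mod_cast hk ω) (hp ω)
    · simp only [hω, if_false, mul_zero]
      have : (Finset.univ.filter (fun i => ω ∈ B i)) = ∅ := by
        ext i
        simp only [Finset.mem_filter, Finset.mem_univ, true_and, Finset.notMem_empty,
          iff_false]
        intro hi
        exact hω (Finset.mem_biUnion.mpr ⟨i, Finset.mem_univ i, hi⟩)
      simp [this]
  calc (∑ ω ∈ A ∩ Finset.univ.biUnion B, p ω)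
      ≤ ε * ∑ i, ∑ ω ∈ B i, p ω := le_trans step1 step2
    _ ≤ ε * ((k : ℝ) * ∑ ω ∈ Finset.univ.biUnion B, p ω) :=
        mul_le_mul_of_nonneg_left step3 hε
    _ = ε * k * ∑ ω ∈ Finset.univ.biUnion B, p ω := by ring
end

section
/- Suppose an m × n boolean matrix M is (d,e)-disjunct. Then for any two distinct subsets S, S' of columns, each of size at most d, the boolean OR of the columns in S and the boolean OR of the columns in S' differ in more than e positions. -/
open Classical in
/-- `M` is `(d,e)`-disjunct: for every column `c0` and set `T` of at most `d` other
columns, the number of rows with a `1` at `c0` and `0` on all of `T` exceeds `e`. -/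
def IsDisjunctE (m n d e : ℕ) (M : Fin m → Fin n → Bool) : Prop :=
  ∀ (c0 : Fin n) (T : Finset (Fin n)), c0 ∉ T → T.card ≤ d →
    e < (Finset.univ.filter (fun i : Fin m => M i c0 = true ∧ ∀ j ∈ T, M i j = false)).card

open Classical in
lemma aux_stmt4 (m n d e : ℕ) (M : Fin m → Fin n → Bool) (hM : IsDisjunctE m n d e M)
    (S S' : Finset (Fin n)) (c0 : Fin n) (hc0S : c0 ∈ S) (hc0 : c0 ∉ S')
    (hS' : S'.card ≤ d) :
    e < (Finset.univ.filter
      (fun i : Fin m => (∃ j ∈ S, M i j = true) ≠ (∃ j ∈ S', M i j = true))).card := by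
  refine lt_of_lt_of_le (hM c0 S' hc0 hS') (Finset.card_le_card ?_)
  intro i hi
  simp only [Finset.mem_filter, Finset.mem_univ, true_and] at hi ⊢
  obtain ⟨h1, h2⟩ := hi
  intro h
  have hex : ∃ j ∈ S, M i j = true := ⟨c0, hc0S, h1⟩
  rw [h] at hex
  obtain ⟨j, hj, hjt⟩ := hex
  simp [h2 j hj] at hjt

open Classical in
/-- A `(d,e)`-disjunct matrix: the OR-outcome vectors of two distinct sets of at most `d`
columns differ in more than `e` positions. -/
theorem stmt_4 (m n d e : ℕ) (M : Fin m → Fin n → Bool) (hM : IsDisjunctE m n d e M)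
    (S S' : Finset (Fin n)) (hne : S ≠ S') (hS : S.card ≤ d) (hS' : S'.card ≤ d) :
    e < (Finset.univ.filter
      (fun i : Fin m => (∃ j ∈ S, M i j = true) ≠ (∃ j ∈ S', M i j = true))).card := by
  by_cases hsub : S ⊆ S'
  · obtain ⟨c0, hc0S', hc0S⟩ : ∃ c0 ∈ S', c0 ∉ S := by
      by_contra hcon
      push_neg at hcon
      exact hne (Finset.Subset.antisymm hsub hcon)
    have := aux_stmt4 m n d e M hM S' S c0 hc0S' hc0S hS
    convert this using 3
    exact ne_comm
  · obtain ⟨c0, hc0S, hc0⟩ := Finset.not_subset.mp hsub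
    exact aux_stmt4 m n d e M hM S S' c0 hc0S hc0 hS'
end

section
/- Let v_i, v_j be states of a Markov chain with j ≥ i, and let E be an event depending only on the first i steps. Suppose that conditioned on (v_i = u, E), and also conditioned on E alone, the distribution of v_j is δ-close (ℓ∞) to a fixed distribution μ with μ(v) ≥ 1/(cn), and δ ≤ (1/(2cn))^2 with cn ≥ 2. Then |Pr[v_i = u | v_j = v, E] - Pr[v_i = u | E]| ≤ 2δ/(1/(cn) - δ) ≤ 8δcn/3 ≤ 2/(3cn). -/
/-- Probability of a finite event under the weight function `p`. -/
def prOf {Ω : Type*} [Fintype Ω] (p : Ω → ℝ) (s : Finset Ω) : ℝ := ∑ ω ∈ s, p ω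

open Classical in
/-- Near-independence across the mixing time: with `U = {v_i = u}`, `Vv = {v_j = v}` and a
history event `E`, if the conditional distributions of `v_j` (given `U ∩ E`, resp. `E`)
assign `v` a probability `δ`-close to `μ(v) ≥ 1/(cn)`, with `δ ≤ (1/(2cn))²` and `cn ≥ 2`,
then `|Pr[U | Vv ∩ E] - Pr[U | E]| ≤ 2δ/(1/(cn) - δ) ≤ 8δcn/3 ≤ 2/(3cn)`. -/
theorem stmt_11 {Ω : Type*} [Fintype Ω] (p : Ω → ℝ) (hp : ∀ ω, 0 ≤ p ω)
    (hsum : ∑ ω, p ω = 1) (U Vv E : Finset Ω)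
    (c n δ μv : ℝ) (hc : 1 ≤ c) (hn : 1 ≤ n) (hcn : 2 ≤ c * n)
    (hδ0 : 0 ≤ δ) (hδ : δ ≤ (1 / (2 * c * n)) ^ 2) (hμ : 1 / (c * n) ≤ μv)
    (hEpos : 0 < prOf p E) (hUEpos : 0 < prOf p (U ∩ E)) (hVEpos : 0 < prOf p (Vv ∩ E))
    (hclose1 : |prOf p (Vv ∩ (U ∩ E)) / prOf p (U ∩ E) - μv| ≤ δ)
    (hclose2 : |prOf p (Vv ∩ E) / prOf p E - μv| ≤ δ) :
    |prOf p (U ∩ (Vv ∩ E)) / prOf p (Vv ∩ E) - prOf p (U ∩ E) / prOf p E| ≤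
        2 * δ / (1 / (c * n) - δ) ∧
      2 * δ / (1 / (c * n) - δ) ≤ 8 * δ * c * n / 3 ∧
      8 * δ * c * n / 3 ≤ 2 / (3 * c * n) := by
  set x := c * n with hxdef
  have hxpos : 0 < x := by nlinarith
  -- 4 δ x² ≤ 1
  have hδ' : 4 * δ * x ^ 2 ≤ 1 := by
    have h1 : (1 / (2 * c * n)) ^ 2 = 1 / (4 * x ^ 2) := by
      field_simp; ring
    have h2 : δ ≤ 1 / (4 * x ^ 2) := h1 ▸ hδ
    rw [le_div_iff₀ (by positivity)] at h2
    nlinarith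
  have hδx : δ * x ≤ 1 / 8 := by nlinarith [mul_nonneg hδ0 hxpos.le]
  have hux : (1 / x) * x = 1 := one_div_mul_cancel (ne_of_gt hxpos)
  have h34 : 3 / 4 * (1 / x) ≤ 1 / x - δ := by nlinarith
  have hden_pos : 0 < 1 / x - δ := by
    have h14 : 0 < 1 / x := by positivity
    nlinarith
  -- abbreviations
  set A := prOf p (Vv ∩ (U ∩ E)) with hA
  set B := prOf p (U ∩ E) with hB
  set C := prOf p (Vv ∩ E) with hC
  set D := prOf p E with hD
  have hset : U ∩ (Vv ∩ E) = Vv ∩ (U ∩ E) := by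
    ext ω; simp [Finset.mem_inter]; tauto
  have hAeq : prOf p (U ∩ (Vv ∩ E)) = A := by rw [hset]
  have hBD : B ≤ D := by
    refine Finset.sum_le_sum_of_subset_of_nonneg (Finset.inter_subset_right) ?_
    intro i _ _; exact hp i
  have hBne : B ≠ 0 := ne_of_gt hUEpos
  have hCne : C ≠ 0 := ne_of_gt hVEpos
  have hDne : D ≠ 0 := ne_of_gt hEpos
  -- b = C/D lower bound
  have hb_lb : 1 / x - δ ≤ C / D := by
    have := abs_le.mp hclose2
    have h := this.1
    linarith [hμ]
  have hb_pos : 0 < C / D := lt_of_lt_of_le hden_pos hb_lb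
  have hq_pos : 0 < B / D := div_pos hUEpos hEpos
  have hq_le : B / D ≤ 1 := by
    rw [div_le_one hEpos]; exact hBD
  -- key algebraic identity
  have hkey : A / C - B / D = (B / D) * (A / B - C / D) / (C / D) := by
    field_simp
  have habs : |A / B - C / D| ≤ 2 * δ := by
    calc |A / B - C / D| ≤ |A / B - μv| + |μv - C / D| := abs_sub_le _ _ _
      _ = |A / B - μv| + |C / D - μv| := by rw [abs_sub_comm μv]
      _ ≤ δ + δ := add_le_add hclose1 hclose2
      _ = 2 * δ := by ring
  have hnum : (B / D) * |A / B - C / D| ≤ 2 * δ := by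
    calc (B / D) * |A / B - C / D| ≤ 1 * |A / B - C / D| :=
          mul_le_mul_of_nonneg_right hq_le (abs_nonneg _)
      _ = |A / B - C / D| := one_mul _
      _ ≤ 2 * δ := habs
  have part1 : |A / C - B / D| ≤ 2 * δ / (1 / x - δ) := by
    rw [hkey, abs_div, abs_mul, abs_of_pos hq_pos, abs_of_pos hb_pos]
    exact div_le_div₀ (by positivity) hnum hden_pos hb_lb
  have part2 : 2 * δ / (1 / x - δ) ≤ 8 * δ * x / 3 := by
    have hrw : 8 * δ * x / 3 = 2 * δ / (3 / (4 * x)) := by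
      field_simp; ring
    rw [hrw]
    have h34' : 3 / (4 * x) ≤ 1 / x - δ := by
      have : 3 / (4 * x) = 3 / 4 * (1 / x) := by ring
      rw [this]; exact h34
    exact div_le_div₀ (by positivity) le_rfl (by positivity) h34'
  have part3 : 8 * δ * x / 3 ≤ 2 / (3 * x) := by
    rw [div_le_div_iff₀ (by norm_num) (by positivity)]
    nlinarith
  have hx8 : 8 * δ * c * n = 8 * δ * x := by rw [hxdef]; ring
  have hx3 : 3 * c * n = 3 * x := by rw [hxdef]; ring
  refine ⟨?_, ?_, ?_⟩
  · rw [hAeq]; exact part1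
  · rw [hx8]; exact part2
  · rw [hx8, hx3]; exact part3
end

section
/- Let M be a random m × n boolean matrix with independent rows such that for every fixed column v and every fixed set A of at most d other columns, each row separates (v, A) with probability at least π. Fix a set S of at most d columns. Then with probability at least 1 - n·(1-π)^m over M, for every set S' ≠ S of at most d columns, the OR of columns of S differs from the OR of columns of S' in at least one position. In particular m = O((log n)/π) rows suffice for this fixed-input guarantee, a factor ≈ d fewer than the O(d log(n/d)/π) needed for full d-disjunctness. -/
open Finset in
lemma sum_biUnion_le_aux {ι α : Type*} [DecidableEq α] (s : Finset ι) (t : ι → Finset α)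
    (f : α → ℝ) (hf : ∀ x, 0 ≤ f x) :
    ∑ x ∈ s.biUnion t, f x ≤ ∑ i ∈ s, ∑ x ∈ t i, f x := by
  classical
  induction s using Finset.induction with
  | empty => simp
  | insert _ _ h ih =>
    rename_i a s'
    rw [biUnion_insert, sum_insert h]
    calc ∑ x ∈ t a ∪ s'.biUnion t, f x
        = ∑ x ∈ t a, f x + ∑ x ∈ (s'.biUnion t) \ t a, f x := by
          rw [← Finset.sum_union (Finset.disjoint_sdiff), Finset.union_sdiff_self_eq_union]
      _ ≤ ∑ x ∈ t a, f x + ∑ x ∈ s'.biUnion t, f x :=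
          add_le_add le_rfl (Finset.sum_le_sum_of_subset_of_nonneg Finset.sdiff_subset
            (fun x _ _ => hf x))
      _ ≤ _ := add_le_add le_rfl ih

open Classical Finset in
/-- Fixed-input guarantee for a random measurement matrix: if rows independently separate
any fixed pair `(v, A)` (`v ∉ A`, `|A| ≤ d`) with probability at least `π` — so that no
row separates `(v,A)` with probability at most `(1-π)^m` — then for a fixed set `S` of at
most `d` columns, with probability at least `1 - n(1-π)^m` the OR of the columns of `S`
differs from the OR of the columns of every other set `S'` of at most `d` columns. -/
theorem stmt_19 (m n d : ℕ) (π : ℝ) (hπ0 : 0 ≤ π) (hπ1 : π ≤ 1)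
    {Ω : Type*} [Fintype Ω] (p : Ω → ℝ) (hp : ∀ ω, 0 ≤ p ω) (hsum : ∑ ω, p ω = 1)
    (M : Ω → Fin m → Fin n → Bool)
    (hsep : ∀ (v : Fin n) (A : Finset (Fin n)), v ∉ A → A.card ≤ d →
      ∑ ω ∈ Finset.univ.filter (fun ω =>
          ∀ i : Fin m, ¬(M ω i v = true ∧ ∀ j ∈ A, M ω i j = false)), p ω
        ≤ (1 - π) ^ m)
    (S : Finset (Fin n)) (hS : S.card ≤ d) :
    1 - (n : ℝ) * (1 - π) ^ m ≤
      ∑ ω ∈ Finset.univ.filter (fun ω =>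
          ∀ S' : Finset (Fin n), S' ≠ S → S'.card ≤ d →
            ∃ i : Fin m, (∃ j ∈ S, M ω i j = true) ≠ (∃ j ∈ S', M ω i j = true)), p ω := by
  classical
  set Good : Ω → Prop := fun ω =>
    ∀ S' : Finset (Fin n), S' ≠ S → S'.card ≤ d →
      ∃ i : Fin m, (∃ j ∈ S, M ω i j = true) ≠ (∃ j ∈ S', M ω i j = true) with hGood
  -- the "bad" pair for column v
  set A : Fin n → Finset (Fin n) := fun v => if v ∈ S then S.erase v else S with hA
  have hAv : ∀ v, v ∉ A v := by
    intro v; simp only [hA]; split <;> simp_all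
  have hAcard : ∀ v, (A v).card ≤ d := by
    intro v; simp only [hA]; split
    · exact le_trans (Finset.card_le_card (Finset.erase_subset _ _)) hS
    · exact hS
  set Bad : Fin n → Finset Ω := fun v => Finset.univ.filter (fun ω =>
      ∀ i : Fin m, ¬(M ω i v = true ∧ ∀ j ∈ A v, M ω i j = false)) with hBad
  -- key combinatorial step: not Good implies in some Bad v
  have hkey : ∀ ω, ¬ Good ω → ω ∈ Finset.univ.biUnion Bad := by
    intro ω hω
    by_contra hc
    apply hω
    simp only [Finset.mem_biUnion, hBad, Finset.mem_filter, Finset.mem_univ, true_and,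
      not_exists, not_forall] at hc
    -- hc : ∀ v, ∃ i, M ω i v = true ∧ ∀ j ∈ A v, M ω i j = false
    intro S' hne hcard
    by_cases hsub : S' ⊆ S
    · -- S' ⊊ S, pick v ∈ S \ S'
      have hss : S' ⊂ S := lt_of_le_of_ne hsub hne
      obtain ⟨v, hvS, hvS'⟩ := Finset.exists_of_ssubset hss
      obtain ⟨i, hiv⟩ := hc v
      rw [not_not] at hiv
      refine ⟨i, ?_⟩
      have h1 : ∃ j ∈ S, M ω i j = true := ⟨v, hvS, hiv.1⟩
      have h2 : ¬ ∃ j ∈ S', M ω i j = true := by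
        rintro ⟨j, hjS', hjt⟩
        have : M ω i j = false := by
          apply hiv.2
          simp only [hA, if_pos hvS, Finset.mem_erase]
          exact ⟨fun h => hvS' (h ▸ hjS'), hsub hjS'⟩
        simp [this] at hjt
      intro heq; rw [heq] at h1; exact h2 h1
    · -- pick v ∈ S' \ S
      obtain ⟨v, hvS', hvS⟩ := Finset.not_subset.mp hsub
      obtain ⟨i, hiv⟩ := hc v
      rw [not_not] at hiv
      refine ⟨i, ?_⟩
      have h1 : ¬ ∃ j ∈ S, M ω i j = true := by
        rintro ⟨j, hjS, hjt⟩
        have : M ω i j = false := by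
          apply hiv.2
          simpa only [hA, if_neg hvS] using hjS
        simp [this] at hjt
      have h2 : ∃ j ∈ S', M ω i j = true := ⟨v, hvS', hiv.1⟩
      intro heq; rw [heq] at h1; exact h1 h2
  have hsplit : ∑ ω ∈ Finset.univ.filter Good, p ω
      + ∑ ω ∈ Finset.univ.filter (fun ω => ¬ Good ω), p ω = 1 := by
    rw [Finset.sum_filter_add_sum_filter_not, hsum]
  have hbadle : ∑ ω ∈ Finset.univ.filter (fun ω => ¬ Good ω), p ω
      ≤ (n : ℝ) * (1 - π) ^ m := by
    calc ∑ ω ∈ Finset.univ.filter (fun ω => ¬ Good ω), p ω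
        ≤ ∑ ω ∈ Finset.univ.biUnion Bad, p ω := by
          apply Finset.sum_le_sum_of_subset_of_nonneg
          · intro ω hω
            exact hkey ω (by simpa using hω)
          · exact fun ω _ _ => hp ω
      _ ≤ ∑ v : Fin n, ∑ ω ∈ Bad v, p ω := sum_biUnion_le_aux _ _ _ hp
      _ ≤ ∑ _v : Fin n, (1 - π) ^ m := by
          apply Finset.sum_le_sum
          intro v _
          exact hsep v (A v) (hAv v) (hAcard v)
      _ = (n : ℝ) * (1 - π) ^ m := by simp [mul_comm]
  linarith
end
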